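/- In the Heisenberg group (the free step-2 nilpotent group G²(E) on a 2-dimensional inner product space E with orthonormal frame X, Y), the Carnot–Carathéodory distance from the identity to a horizontal element a·X + b·Y equals sqrt(a² + b²), i.e. ρ(0, zZ + z̄Z̄) = |z| where z = a + ib. -/

import Mathlib

open MeasureTheory

/-- The Carnot–Carathéodory distance from the identity in the Heisenberg group
`G²(ℝ²)`, in exponential coordinates: the point is `a·X + b·Y + σ·X∧Y`.  Horizontal
curves are absolutely continuous curves `Γ = γ + γ⁽²⁾` with `γ' = u` and
`(γ⁽²⁾)' = ½ (x u₂ - y u₁)`, encoded via their `L¹` control `u = (u₁, u₂)`. -/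
noncomputable def heisCC (a b σ : ℝ) : ℝ :=
  sInf {L : ℝ | ∃ u v : ℝ → ℝ,
    IntervalIntegrable u volume 0 1 ∧ IntervalIntegrable v volume 0 1 ∧
    (∫ t in (0:ℝ)..1, u t) = a ∧ (∫ t in (0:ℝ)..1, v t) = b ∧
    (∫ t in (0:ℝ)..1,
        (1 / 2) * ((∫ s in (0:ℝ)..t, u s) * v t - (∫ s in (0:ℝ)..t, v s) * u t)) = σ ∧
    L = ∫ t in (0:ℝ)..1, Real.sqrt (u t ^ 2 + v t ^ 2)}

/-- The speed `√(u²+v²)` is interval integrable whenever `u, v` are. -/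
lemma speed_integrable {u v : ℝ → ℝ} (hu : IntervalIntegrable u volume 0 1)
    (hv : IntervalIntegrable v volume 0 1) :
    IntervalIntegrable (fun t => Real.sqrt (u t ^ 2 + v t ^ 2)) volume 0 1 := by
  have husm : AEStronglyMeasurable u (volume.restrict (Set.uIoc (0:ℝ) 1)) := by
    simpa [Set.uIoc_of_le (by norm_num : (0:ℝ) ≤ 1)] using hu.1.aestronglyMeasurable
  have hvsm : AEStronglyMeasurable v (volume.restrict (Set.uIoc (0:ℝ) 1)) := by
    simpa [Set.uIoc_of_le (by norm_num : (0:ℝ) ≤ 1)] using hv.1.aestronglyMeasurable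
  refine (hu.abs.add hv.abs).mono_fun ?_ ?_
  · exact Real.continuous_sqrt.comp_aestronglyMeasurable
      (((husm.mul husm).add (hvsm.mul hvsm)).congr (by filter_upwards with t; simp; ring))
  · filter_upwards with t
    have h1 : Real.sqrt (u t ^ 2 + v t ^ 2) ≤ |u t| + |v t| := by
      have := Real.sqrt_le_sqrt (show u t ^ 2 + v t ^ 2 ≤ (|u t| + |v t|) ^ 2 by
        nlinarith [mul_nonneg (abs_nonneg (u t)) (abs_nonneg (v t)), sq_abs (u t), sq_abs (v t)])
      rwa [Real.sqrt_sq (by positivity)] at this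
    have h2 : (0:ℝ) ≤ Real.sqrt (u t ^ 2 + v t ^ 2) := Real.sqrt_nonneg _
    simp only [Real.norm_eq_abs, abs_of_nonneg h2, abs_of_nonneg (by positivity : (0:ℝ) ≤ |u t| + |v t|)]
    exact h1

/-- Lower bound: the length of any admissible control dominates `√(a²+b²)`. -/
lemma length_lower {u v : ℝ → ℝ} (hu : IntervalIntegrable u volume 0 1)
    (hv : IntervalIntegrable v volume 0 1)
    (ha : (∫ t in (0:ℝ)..1, u t) = a) (hb : (∫ t in (0:ℝ)..1, v t) = b) :
    Real.sqrt (a ^ 2 + b ^ 2) ≤ ∫ t in (0:ℝ)..1, Real.sqrt (u t ^ 2 + v t ^ 2) := by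
  set S := Real.sqrt (a ^ 2 + b ^ 2) with hS
  have hSnn : 0 ≤ S := Real.sqrt_nonneg _
  have hSsq : S ^ 2 = a ^ 2 + b ^ 2 := Real.sq_sqrt (by positivity)
  rcases eq_or_lt_of_le hSnn with h0 | hpos
  · rw [← h0]
    exact intervalIntegral.integral_nonneg (by norm_num) (fun t _ => Real.sqrt_nonneg _)
  · set c := a / S
    set d := b / S
    have hcd : c ^ 2 + d ^ 2 = 1 := by
      show (a / S) ^ 2 + (b / S) ^ 2 = 1
      rw [div_pow, div_pow, ← add_div, ← hSsq]
      exact div_self (by positivity)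
    have key : ∀ t, c * u t + d * v t ≤ Real.sqrt (u t ^ 2 + v t ^ 2) := by
      intro t
      have hs : (0:ℝ) ≤ Real.sqrt (u t ^ 2 + v t ^ 2) := Real.sqrt_nonneg _
      have hsq : Real.sqrt (u t ^ 2 + v t ^ 2) ^ 2 = u t ^ 2 + v t ^ 2 :=
        Real.sq_sqrt (by positivity)
      nlinarith [sq_nonneg (c * v t - d * u t), sq_nonneg (Real.sqrt (u t ^ 2 + v t ^ 2) + (c * u t + d * v t))]
    have hcu : IntervalIntegrable (fun t => c * u t + d * v t) volume 0 1 :=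
      (hu.const_mul c).add (hv.const_mul d)
    have hmono : (∫ t in (0:ℝ)..1, (c * u t + d * v t)) ≤
        ∫ t in (0:ℝ)..1, Real.sqrt (u t ^ 2 + v t ^ 2) :=
      intervalIntegral.integral_mono_on (by norm_num) hcu (speed_integrable hu hv)
        (fun t _ => key t)
    have hlin : (∫ t in (0:ℝ)..1, (c * u t + d * v t)) = c * a + d * b := by
      rw [intervalIntegral.integral_add (hu.const_mul c) (hv.const_mul d),
        intervalIntegral.integral_const_mul, intervalIntegral.integral_const_mul, ha, hb]
    have hcab : c * a + d * b = S := by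
      show a / S * a + b / S * b = S
      rw [div_mul_eq_mul_div, div_mul_eq_mul_div, ← add_div, div_eq_iff hpos.ne']
      nlinarith [hSsq]
    rw [hlin, hcab] at hmono
    exact hmono

/-- The CC-distance from the identity to the horizontal element `a·X + b·Y`
equals `√(a² + b²)`, i.e. `ρ(0, zZ + z̄Z̄) = |z|` with `z = a + ib`. -/
theorem stmt_5 (a b : ℝ) : heisCC a b 0 = Real.sqrt (a ^ 2 + b ^ 2) := by
  unfold heisCC
  have hmem : Real.sqrt (a ^ 2 + b ^ 2) ∈ {L : ℝ | ∃ u v : ℝ → ℝ,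
      IntervalIntegrable u volume 0 1 ∧ IntervalIntegrable v volume 0 1 ∧
      (∫ t in (0:ℝ)..1, u t) = a ∧ (∫ t in (0:ℝ)..1, v t) = b ∧
      (∫ t in (0:ℝ)..1,
          (1 / 2) * ((∫ s in (0:ℝ)..t, u s) * v t - (∫ s in (0:ℝ)..t, v s) * u t)) = 0 ∧
      Real.sqrt (a ^ 2 + b ^ 2) = ∫ t in (0:ℝ)..1, Real.sqrt (u t ^ 2 + v t ^ 2)} := by
    refine ⟨fun _ => a, fun _ => b, intervalIntegrable_const, intervalIntegrable_const,
      by simp, by simp, ?_, by simp⟩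
    have hzero : ∀ t : ℝ, (1 / 2 : ℝ) * ((∫ s in (0:ℝ)..t, a) * b - (∫ s in (0:ℝ)..t, b) * a) = 0 := by
      intro t
      simp [intervalIntegral.integral_const, smul_eq_mul]
      ring
    simp only [hzero, intervalIntegral.integral_zero]
  have hbdd : BddBelow {L : ℝ | ∃ u v : ℝ → ℝ,
      IntervalIntegrable u volume 0 1 ∧ IntervalIntegrable v volume 0 1 ∧
      (∫ t in (0:ℝ)..1, u t) = a ∧ (∫ t in (0:ℝ)..1, v t) = b ∧
      (∫ t in (0:ℝ)..1,
          (1 / 2) * ((∫ s in (0:ℝ)..t, u s) * v t - (∫ s in (0:ℝ)..t, v s) * u t)) = 0 ∧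
      L = ∫ t in (0:ℝ)..1, Real.sqrt (u t ^ 2 + v t ^ 2)} := by
    refine ⟨Real.sqrt (a ^ 2 + b ^ 2), ?_⟩
    rintro L ⟨u, v, hu, hv, ha, hb, -, rfl⟩
    exact length_lower hu hv ha hb
  refine le_antisymm (csInf_le hbdd hmem) (le_csInf ⟨_, hmem⟩ ?_)
  rintro L ⟨u, v, hu, hv, ha, hb, -, rfl⟩
  exact length_lower hu hv ha hb
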